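/- For any α ∈ ℂ, the subspace of Ŝ'(2,α) spanned by ℒ_n^α, H_n, 𝔥_n^α, 𝔭_n (n ∈ ℤ) and 𝒸 is a Lie sub-superalgebra, and the linear map φ defined by φ(ℒ_n^α) = ℒ_n − (α/2)H_n + (α²/24)δ_{n,0}𝒸, φ(H_n) = H_n − (α/6)δ_{n,0}𝒸, φ(𝔥_n^α) = (1/√2)G^+_{n−1/2}, φ(𝔭_n) = (1/√2)G^−_{n+1/2}, φ(𝒸) = 𝒸 is an isomorphism of Lie superalgebras from this subalgebra onto the N = 2 superconformal algebra (the spectral flow transformation). -/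

import Mathlib

noncomputable section

/-- Kronecker delta `δ_{n,0}` with values in `ℂ`. -/
def deltaZ (n : ℤ) : ℂ := if n = 0 then 1 else 0

/-- Basis symbols of the subalgebra of `Ŝ'(2,α)` spanned by `ℒ_n^α, H_n, 𝔥_n^α, 𝔭_n`
and the central element `𝒸`. -/
inductive BSub : Type
  | l (n : ℤ) | h (n : ℤ) | g (n : ℤ) | q (n : ℤ) | cen
deriving DecidableEq

/-- Basis symbols of the `N = 2` superconformal algebra: `ℒ_n`, `H_n`,
`gp n = G⁺_{n−1/2}`, `gm n = G⁻_{n+1/2}` and the central element `𝒸`. -/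
inductive BN2 : Type
  | l (n : ℤ) | h (n : ℤ) | gp (n : ℤ) | gm (n : ℤ) | cen
deriving DecidableEq

open BSub in
/-- Structure constants of the subalgebra `⟨ℒ_n^α, H_n, 𝔥_n^α, 𝔭_n, 𝒸⟩` of `Ŝ'(2,α)`
(relations (4.8) together with the cocycle (4.9); odd-odd brackets are symmetric,
`𝒸` is central). -/
def brSub (α : ℂ) : BSub → BSub → (BSub →₀ ℂ)
  | l n, l k => ((n : ℂ) - k) • Finsupp.single (l (n + k)) 1
      + ((1 / 12 : ℂ) * n * ((n : ℂ) ^ 2 - 1) * deltaZ (n + k)) • Finsupp.single cen 1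
  | l n, h k => (-(k : ℂ)) • Finsupp.single (h (n + k)) 1
  | h n, l k => (n : ℂ) • Finsupp.single (h (n + k)) 1
  | l n, g k => (((n : ℂ) - 2 * k + 1 - α) / 2) • Finsupp.single (g (n + k)) 1
  | g n, l k => (-(((k : ℂ) - 2 * n + 1 - α) / 2)) • Finsupp.single (g (n + k)) 1
  | l n, q k => (((n : ℂ) - 2 * k - 1 + α) / 2) • Finsupp.single (q (n + k)) 1
  | q n, l k => (-(((k : ℂ) - 2 * n - 1 + α) / 2)) • Finsupp.single (q (n + k)) 1
  | h n, h k => ((1 / 3 : ℂ) * n * deltaZ (n + k)) • Finsupp.single cen 1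
  | h n, g k => Finsupp.single (g (n + k)) 1
  | g n, h k => -Finsupp.single (g (n + k)) 1
  | h n, q k => -Finsupp.single (q (n + k)) 1
  | q n, h k => Finsupp.single (q (n + k)) 1
  | g n, q k => Finsupp.single (l (n + k)) 1
      - (((k : ℂ) - n + 1 - α) / 2) • Finsupp.single (h (n + k)) 1
      + ((1 / 6 : ℂ) * (((n : ℂ) - 1 + (α + 1) / 2) ^ 2 - 1 / 4) * deltaZ (n + k)) •
          Finsupp.single cen 1
  | q n, g k => Finsupp.single (l (n + k)) 1
      - (((n : ℂ) - k + 1 - α) / 2) • Finsupp.single (h (n + k)) 1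
      + ((1 / 6 : ℂ) * (((k : ℂ) - 1 + (α + 1) / 2) ^ 2 - 1 / 4) * deltaZ (n + k)) •
          Finsupp.single cen 1
  | _, _ => 0

open BN2 in
/-- Structure constants of the `N = 2` superconformal algebra (3.1), with
`gp n = G⁺_{n−1/2}` and `gm n = G⁻_{n+1/2}`. -/
def brN2 : BN2 → BN2 → (BN2 →₀ ℂ)
  | l n, l k => ((n : ℂ) - k) • Finsupp.single (l (n + k)) 1
      + ((1 / 12 : ℂ) * ((n : ℂ) ^ 3 - n) * deltaZ (n + k)) • Finsupp.single cen 1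
  | l n, h k => (-(k : ℂ)) • Finsupp.single (h (n + k)) 1
  | h n, l k => (n : ℂ) • Finsupp.single (h (n + k)) 1
  | l n, gp k => ((n : ℂ) / 2 - k + 1 / 2) • Finsupp.single (gp (n + k)) 1
  | gp n, l k => (-((k : ℂ) / 2 - n + 1 / 2)) • Finsupp.single (gp (n + k)) 1
  | l n, gm k => ((n : ℂ) / 2 - k - 1 / 2) • Finsupp.single (gm (n + k)) 1
  | gm n, l k => (-((k : ℂ) / 2 - n - 1 / 2)) • Finsupp.single (gm (n + k)) 1
  | h n, h k => ((1 / 3 : ℂ) * n * deltaZ (n + k)) • Finsupp.single cen 1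
  | h n, gp k => Finsupp.single (gp (n + k)) 1
  | gp n, h k => -Finsupp.single (gp (n + k)) 1
  | h n, gm k => -Finsupp.single (gm (n + k)) 1
  | gm n, h k => Finsupp.single (gm (n + k)) 1
  | gp n, gm k => (2 : ℂ) • Finsupp.single (l (n + k)) 1
      + ((n : ℂ) - k - 1) • Finsupp.single (h (n + k)) 1
      + ((1 / 3 : ℂ) * ((n : ℂ) ^ 2 - n) * deltaZ (n + k)) • Finsupp.single cen 1
  | gm n, gp k => (2 : ℂ) • Finsupp.single (l (n + k)) 1
      + ((k : ℂ) - n - 1) • Finsupp.single (h (n + k)) 1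
      + ((1 / 3 : ℂ) * ((k : ℂ) ^ 2 - k) * deltaZ (n + k)) • Finsupp.single cen 1
  | _, _ => 0

/-- The bracket of the subalgebra of `Ŝ'(2,α)`, extended bilinearly. -/
def BrSub (α : ℂ) (x y : BSub →₀ ℂ) : BSub →₀ ℂ :=
  x.sum fun b cb => y.sum fun b' cb' => (cb * cb') • brSub α b b'

/-- The bracket of the `N = 2` superconformal algebra, extended bilinearly. -/
def BrN2 (x y : BN2 →₀ ℂ) : BN2 →₀ ℂ :=
  x.sum fun b cb => y.sum fun b' cb' => (cb * cb') • brN2 b b'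

open BSub in
/-- The spectral flow map `φ` on the basis:
`φ(ℒ_n^α) = ℒ_n − (α/2)H_n + (α²/24)δ_{n,0}𝒸`, `φ(H_n) = H_n − (α/6)δ_{n,0}𝒸`,
`φ(𝔥_n^α) = (1/√2)G⁺_{n−1/2}`, `φ(𝔭_n) = (1/√2)G⁻_{n+1/2}`, `φ(𝒸) = 𝒸`. -/
def phi0 (α : ℂ) : BSub → (BN2 →₀ ℂ)
  | l n => Finsupp.single (BN2.l n) 1 - (α / 2) • Finsupp.single (BN2.h n) 1
      + (α ^ 2 / 24 * deltaZ n) • Finsupp.single BN2.cen 1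
  | h n => Finsupp.single (BN2.h n) 1 - (α / 6 * deltaZ n) • Finsupp.single BN2.cen 1
  | g n => ((Real.sqrt 2 : ℂ))⁻¹ • Finsupp.single (BN2.gp n) 1
  | q n => ((Real.sqrt 2 : ℂ))⁻¹ • Finsupp.single (BN2.gm n) 1
  | cen => Finsupp.single BN2.cen 1

/-- The linear extension of `φ`. -/
def Phi (α : ℂ) (x : BSub →₀ ℂ) : BN2 →₀ ℂ := x.sum fun b c => c • phi0 α b


-- ### Auxiliary lemmas

open Finsupp in
lemma Phi_single (α : ℂ) (a : BSub) (c : ℂ) :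
    Phi α (Finsupp.single a c) = c • phi0 α a := by
  simp [Phi, Finsupp.sum_single_index]

lemma Phi_zero (α : ℂ) : Phi α 0 = 0 := by simp [Phi]

lemma Phi_add (α : ℂ) (x y : BSub →₀ ℂ) : Phi α (x + y) = Phi α x + Phi α y := by
  simp [Phi, Finsupp.sum_add_index, add_smul]

lemma Phi_smul (α : ℂ) (c : ℂ) (x : BSub →₀ ℂ) : Phi α (c • x) = c • Phi α x := by
  unfold Phi
  rw [Finsupp.sum_smul_index' (by simp), Finsupp.smul_sum]
  simp [mul_smul]

lemma Phi_sub (α : ℂ) (x y : BSub →₀ ℂ) : Phi α (x - y) = Phi α x - Phi α y := by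
  have := Phi_add α (x - y) y
  simp at this
  rw [this]; abel

lemma Phi_neg (α : ℂ) (x : BSub →₀ ℂ) : Phi α (-x) = - Phi α x := by
  have := Phi_sub α 0 x; simpa [Phi_zero] using this

lemma BrN2_zero_left (y : BN2 →₀ ℂ) : BrN2 0 y = 0 := by simp [BrN2]
lemma BrN2_zero_right (x : BN2 →₀ ℂ) : BrN2 x 0 = 0 := by simp [BrN2]

lemma BrN2_add_left (x x' y : BN2 →₀ ℂ) : BrN2 (x + x') y = BrN2 x y + BrN2 x' y := by
  unfold BrN2
  rw [Finsupp.sum_add_index (by simp) (by intro b c c'; simp [add_mul, add_smul, Finsupp.sum_add])]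

lemma BrN2_add_right (x y y' : BN2 →₀ ℂ) : BrN2 x (y + y') = BrN2 x y + BrN2 x y' := by
  unfold BrN2
  rw [← Finsupp.sum_add]
  congr 1; funext b c
  rw [Finsupp.sum_add_index (by simp) (by intro b' c c'; simp [mul_add, add_smul])]

lemma BrN2_smul_left (c : ℂ) (x y : BN2 →₀ ℂ) : BrN2 (c • x) y = c • BrN2 x y := by
  unfold BrN2
  rw [Finsupp.sum_smul_index' (by simp), Finsupp.smul_sum]
  congr 1; funext b d
  rw [Finsupp.smul_sum]
  simp [mul_assoc, mul_smul]

lemma BrN2_smul_right (c : ℂ) (x y : BN2 →₀ ℂ) : BrN2 x (c • y) = c • BrN2 x y := by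
  unfold BrN2
  rw [Finsupp.smul_sum]
  congr 1; funext b d
  rw [Finsupp.sum_smul_index' (by simp), Finsupp.smul_sum]
  congr 1; funext b' d'
  rw [smul_smul, smul_eq_mul]
  ring_nf

lemma BrN2_sub_left (x x' y : BN2 →₀ ℂ) : BrN2 (x - x') y = BrN2 x y - BrN2 x' y := by
  have := BrN2_add_left (x - x') x' y
  simp at this; rw [this]; abel

lemma BrN2_sub_right (x y y' : BN2 →₀ ℂ) : BrN2 x (y - y') = BrN2 x y - BrN2 x y' := by
  have := BrN2_add_right x (y - y') y'
  simp at this; rw [this]; abel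

lemma BrN2_single_single (a b : BN2) (c d : ℂ) :
    BrN2 (Finsupp.single a c) (Finsupp.single b d) = (c * d) • brN2 a b := by
  simp [BrN2, Finsupp.sum_single_index]

lemma BrSub_zero_left (α : ℂ) (y : BSub →₀ ℂ) : BrSub α 0 y = 0 := by simp [BrSub]
lemma BrSub_zero_right (α : ℂ) (x : BSub →₀ ℂ) : BrSub α x 0 = 0 := by simp [BrSub]

lemma BrSub_add_left (α : ℂ) (x x' y : BSub →₀ ℂ) :
    BrSub α (x + x') y = BrSub α x y + BrSub α x' y := by
  unfold BrSub
  rw [Finsupp.sum_add_index (by simp) (by intro b c c'; simp [add_mul, add_smul, Finsupp.sum_add])]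

lemma BrSub_add_right (α : ℂ) (x y y' : BSub →₀ ℂ) :
    BrSub α x (y + y') = BrSub α x y + BrSub α x y' := by
  unfold BrSub
  rw [← Finsupp.sum_add]
  congr 1; funext b c
  rw [Finsupp.sum_add_index (by simp) (by intro b' c c'; simp [mul_add, add_smul])]

lemma BrSub_single_single (α : ℂ) (a b : BSub) (c d : ℂ) :
    BrSub α (Finsupp.single a c) (Finsupp.single b d) = (c * d) • brSub α a b := by
  simp [BrSub, Finsupp.sum_single_index]

lemma sqrt2_ne : ((Real.sqrt 2 : ℝ) : ℂ) ≠ 0 := by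
  norm_cast
  positivity

lemma sqrt2_sq : ((Real.sqrt 2 : ℝ) : ℂ) * ((Real.sqrt 2 : ℝ) : ℂ) = 2 := by
  norm_cast
  exact Real.mul_self_sqrt (by norm_num)

lemma sqrt2_inv_sq : ((Real.sqrt 2 : ℝ) : ℂ)⁻¹ * ((Real.sqrt 2 : ℝ) : ℂ)⁻¹ = 1 / 2 := by
  rw [← mul_inv, sqrt2_sq]
  norm_num

lemma BrN2_invsq (x y : BN2 →₀ ℂ) :
    BrN2 (((Real.sqrt 2 : ℝ) : ℂ)⁻¹ • x) (((Real.sqrt 2 : ℝ) : ℂ)⁻¹ • y)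
      = (1 / 2 : ℂ) • BrN2 x y := by
  rw [BrN2_smul_left, BrN2_smul_right, smul_smul, sqrt2_inv_sq]

lemma sqrt2_inv_mul : ((Real.sqrt 2 : ℝ) : ℂ)⁻¹ * ((Real.sqrt 2 : ℝ) : ℂ) = 1 :=
  inv_mul_cancel₀ sqrt2_ne

lemma sqrt2_mul_inv : ((Real.sqrt 2 : ℝ) : ℂ) * ((Real.sqrt 2 : ℝ) : ℂ)⁻¹ = 1 :=
  mul_inv_cancel₀ sqrt2_ne

-- ### The key basis computation

lemma key (α : ℂ) (a b : BSub) :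
    Phi α (brSub α a b) = BrN2 (phi0 α a) (phi0 α b) := by
  cases a <;> cases b <;>
    simp only [brSub, phi0] <;>
    (try simp only [BrN2_invsq]) <;>
    simp only [Phi_add, Phi_sub, Phi_smul, Phi_single, Phi_zero, Phi_neg, phi0,
      BrN2_add_left, BrN2_add_right, BrN2_sub_left, BrN2_sub_right,
      BrN2_smul_left, BrN2_smul_right, BrN2_single_single, brN2,
      smul_zero, zero_smul, one_mul, mul_one, smul_add, smul_sub, smul_smul, smul_neg] <;>
  first
  | rfl
  | module
  | (rename_i n k
     rcases eq_or_ne (n + k) 0 with hnk | hnk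
     · obtain rfl : k = -n := by omega
       simp only [deltaZ, add_neg_cancel, if_pos rfl]
       module
     · simp only [deltaZ, if_neg hnk]
       module)

-- ### Homomorphism property

lemma hom (α : ℂ) (x y : BSub →₀ ℂ) :
    Phi α (BrSub α x y) = BrN2 (Phi α x) (Phi α y) := by
  induction x using Finsupp.induction_linear with
  | zero => simp [BrSub_zero_left, Phi_zero, BrN2_zero_left]
  | add x1 x2 ih1 ih2 =>
      rw [BrSub_add_left, Phi_add, ih1, ih2, Phi_add, BrN2_add_left]
  | single a c =>
      induction y using Finsupp.induction_linear with
      | zero => simp [BrSub_zero_right, Phi_zero, BrN2_zero_right]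
      | add y1 y2 ih1 ih2 =>
          rw [BrSub_add_right, Phi_add, ih1, ih2, Phi_add, BrN2_add_right]
      | single b d =>
          rw [BrSub_single_single, Phi_smul, key, Phi_single, Phi_single,
            BrN2_smul_left, BrN2_smul_right, smul_smul]

-- ### Inverse map

open BN2 in
/-- The inverse of the spectral flow map on the basis. -/
def psi0 (α : ℂ) : BN2 → (BSub →₀ ℂ)
  | l n => Finsupp.single (BSub.l n) 1 + (α / 2) • Finsupp.single (BSub.h n) 1
      + (α ^ 2 / 24 * deltaZ n) • Finsupp.single BSub.cen 1
  | h n => Finsupp.single (BSub.h n) 1 + (α / 6 * deltaZ n) • Finsupp.single BSub.cen 1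
  | gp n => ((Real.sqrt 2 : ℝ) : ℂ) • Finsupp.single (BSub.g n) 1
  | gm n => ((Real.sqrt 2 : ℝ) : ℂ) • Finsupp.single (BSub.q n) 1
  | cen => Finsupp.single BSub.cen 1

def Psi (α : ℂ) (x : BN2 →₀ ℂ) : BSub →₀ ℂ := x.sum fun b c => c • psi0 α b

lemma Psi_single (α : ℂ) (a : BN2) (c : ℂ) :
    Psi α (Finsupp.single a c) = c • psi0 α a := by
  simp [Psi, Finsupp.sum_single_index]

lemma Psi_zero (α : ℂ) : Psi α 0 = 0 := by simp [Psi]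

lemma Psi_add (α : ℂ) (x y : BN2 →₀ ℂ) : Psi α (x + y) = Psi α x + Psi α y := by
  simp [Psi, Finsupp.sum_add_index, add_smul]

lemma Psi_smul (α : ℂ) (c : ℂ) (x : BN2 →₀ ℂ) : Psi α (c • x) = c • Psi α x := by
  unfold Psi
  rw [Finsupp.sum_smul_index' (by simp), Finsupp.smul_sum]
  simp [mul_smul]

lemma Psi_neg (α : ℂ) (x : BN2 →₀ ℂ) : Psi α (-x) = - Psi α x := by
  have h := Psi_add α (-x) x
  simp only [neg_add_cancel, Psi_zero] at h
  exact eq_neg_of_add_eq_zero_left h.symm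

lemma Psi_phi0 (α : ℂ) (a : BSub) : Psi α (phi0 α a) = Finsupp.single a 1 := by
  cases a <;>
    simp only [phi0, psi0, Psi_add, Psi_smul, Psi_single, Psi_zero, Psi_neg, smul_add,
      smul_smul, sub_eq_add_neg, neg_smul, smul_neg, one_smul, one_mul, mul_one,
      sqrt2_inv_mul] <;>
  module

lemma Phi_psi0 (α : ℂ) (a : BN2) : Phi α (psi0 α a) = Finsupp.single a 1 := by
  cases a <;>
    simp only [phi0, psi0, Phi_add, Phi_smul, Phi_single, Phi_zero, Phi_neg, smul_add,
      smul_sub, smul_smul, sub_eq_add_neg, neg_smul, smul_neg, one_smul, one_mul, mul_one,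
      sqrt2_mul_inv] <;>
  module

lemma Psi_Phi (α : ℂ) (x : BSub →₀ ℂ) : Psi α (Phi α x) = x := by
  induction x using Finsupp.induction_linear with
  | zero => simp [Phi_zero, Psi_zero]
  | add x1 x2 ih1 ih2 => rw [Phi_add, Psi_add, ih1, ih2]
  | single a c => rw [Phi_single, Psi_smul, Psi_phi0, Finsupp.smul_single, smul_eq_mul, mul_one]

lemma Phi_Psi (α : ℂ) (x : BN2 →₀ ℂ) : Phi α (Psi α x) = x := by
  induction x using Finsupp.induction_linear with
  | zero => simp [Phi_zero, Psi_zero]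
  | add x1 x2 ih1 ih2 => rw [Psi_add, Phi_add, ih1, ih2]
  | single a c => rw [Psi_single, Phi_smul, Phi_psi0, Finsupp.smul_single, smul_eq_mul, mul_one]

/-- For any `α ∈ ℂ`, the subspace of `Ŝ'(2,α)` spanned by
`ℒ_n^α, H_n, 𝔥_n^α, 𝔭_n` (`n ∈ ℤ`) and `𝒸` is a Lie sub-superalgebra, and the
spectral flow map `φ` is an isomorphism of Lie superalgebras from it onto the
`N = 2` superconformal algebra. -/
theorem spectral_flow_iso (α : ℂ) :
    Function.Bijective (Phi α) ∧
    ∀ x y : BSub →₀ ℂ, Phi α (BrSub α x y) = BrN2 (Phi α x) (Phi α y) := by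
  exact ⟨Function.bijective_iff_has_inverse.mpr ⟨Psi α, Psi_Phi α, Phi_Psi α⟩, hom α⟩
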